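/- Fix N, fields h : Fin N → ℝ, couplings J : Fin N → Fin N → ℝ, a distinguished spin configuration z₀ ∈ {-1,1}^N (the infeasible state), and a real number D. Then D ≥ ∑_{z ∈ {-1,1}^N, z ≠ z₀} E_{h,J}(z) holds if and only if D ≥ -E_{h,J}(z₀). -/
import Mathlib


/-- The Ising energy of a spin configuration `z` for local fields `h` and couplings `J`:
`E(z) = ∑ i, h i * z i + ∑ i, ∑ j > i, J i j * z i * z j`. -/
noncomputable def isingEnergy {N : ℕ} (h : Fin N → ℝ) (J : Fin N → Fin N → ℝ)
    (z : Fin N → ℝ) : ℝ :=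
  ∑ i, h i * z i + ∑ i, ∑ j ∈ Finset.univ.filter (fun j => i < j), J i j * z i * z j

/-- The finite set of all spin configurations `z : Fin N → ℝ` with `z i ∈ {-1, 1}`. -/
noncomputable def spinConfigs (N : ℕ) : Finset (Fin N → ℝ) :=
  Fintype.piFinset fun _ => ({-1, 1} : Finset ℝ)

lemma flip_mem {N : ℕ} {z : Fin N → ℝ} (hz : z ∈ spinConfigs N) (i : Fin N) :
    Function.update z i (-(z i)) ∈ spinConfigs N := by
  simp only [spinConfigs, Fintype.mem_piFinset] at *
  intro k
  rcases eq_or_ne k i with rfl | hk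
  · simp only [Function.update_self]
    have := hz k
    simp only [Finset.mem_insert, Finset.mem_singleton] at this ⊢
    rcases this with h1|h1 <;> rw [h1] <;> norm_num
  · simpa [Function.update_of_ne hk] using hz k

lemma sum_zero_of_flip {N : ℕ} (f : (Fin N → ℝ) → ℝ) (i : Fin N)
    (hf : ∀ z ∈ spinConfigs N, f z + f (Function.update z i (-(z i))) = 0) :
    ∑ z ∈ spinConfigs N, f z = 0 := by
  apply Finset.sum_involution (fun z _ => Function.update z i (-(z i))) hf
  · intro z hz hfz
    intro hcontra
    have hzi : z i ∈ ({-1, 1} : Finset ℝ) := by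
      simp only [spinConfigs, Fintype.mem_piFinset] at hz; exact hz i
    have : z i = -(z i) := by
      conv_lhs => rw [← hcontra]
      simp
    simp only [Finset.mem_insert, Finset.mem_singleton] at hzi
    rcases hzi with h1 | h1 <;> rw [h1] at this <;> norm_num at this
  · intro z hz; exact flip_mem hz i
  · intro z hz
    ext k
    rcases eq_or_ne k i with rfl | hk
    · simp
    · simp [Function.update_of_ne hk]

lemma sum_single {N : ℕ} (i : Fin N) : ∑ z ∈ spinConfigs N, z i = 0 := by
  apply sum_zero_of_flip _ i
  intro z hz; simp

lemma sum_pair {N : ℕ} (i j : Fin N) (hij : i ≠ j) :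
    ∑ z ∈ spinConfigs N, z i * z j = 0 := by
  apply sum_zero_of_flip _ i
  intro z hz
  simp [Function.update_of_ne hij.symm, Function.update_self]

/-- Theorem 2 of the paper: the total Ising energy summed over all spin
configurations is zero. -/
lemma total_sum_zero {N : ℕ} (h : Fin N → ℝ) (J : Fin N → Fin N → ℝ) :
    ∑ z ∈ spinConfigs N, isingEnergy h J z = 0 := by
  unfold isingEnergy
  rw [Finset.sum_add_distrib]
  have h1 : ∑ z ∈ spinConfigs N, ∑ i, h i * z i = 0 := by
    rw [Finset.sum_comm]
    apply Finset.sum_eq_zero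
    intro i _
    rw [← Finset.mul_sum, sum_single, mul_zero]
  have h2 : ∑ z ∈ spinConfigs N, ∑ i, ∑ j ∈ Finset.univ.filter (fun j => i < j),
      J i j * z i * z j = 0 := by
    rw [Finset.sum_comm]
    apply Finset.sum_eq_zero
    intro i _
    rw [Finset.sum_comm]
    apply Finset.sum_eq_zero
    intro j hj
    simp only [Finset.mem_filter] at hj
    have : ∑ z ∈ spinConfigs N, J i j * z i * z j = J i j * ∑ z ∈ spinConfigs N, z i * z j := by
      rw [Finset.mul_sum]; congr 1; ext z; ring
    rw [this, sum_pair i j (ne_of_lt hj.2), mul_zero]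
  rw [h1, h2, add_zero]

/-- The constraint `D ≥ ∑_{z ≠ z₀} E(z)` (sum over all feasible states) is equivalent to the
single linear constraint `D ≥ -E(z₀)`, where `z₀` is the distinguished (infeasible) state. -/
theorem feasible_sum_constraint_iff (N : ℕ) (h : Fin N → ℝ) (J : Fin N → Fin N → ℝ)
    (z₀ : Fin N → ℝ) (hz₀ : z₀ ∈ spinConfigs N) (D : ℝ) :
    (D ≥ ∑ z ∈ (spinConfigs N).filter (fun z => z ≠ z₀), isingEnergy h J z) ↔
      D ≥ -isingEnergy h J z₀ := by
  have key : ∑ z ∈ (spinConfigs N).filter (fun z => z ≠ z₀), isingEnergy h J z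
      = -isingEnergy h J z₀ := by
    have := total_sum_zero h J
    rw [← Finset.sum_filter_add_sum_filter_not (spinConfigs N) (fun z => z ≠ z₀)] at this
    have h2 : ∑ z ∈ (spinConfigs N).filter (fun z => ¬ z ≠ z₀), isingEnergy h J z
        = isingEnergy h J z₀ := by
      rw [Finset.sum_filter]
      rw [Finset.sum_eq_single z₀] <;> simp_all
    linarith
  rw [key]
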